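/- Fix n ≥ 2 and 1 ≤ k ≤ n. For every tuple (a_1, b_1, …, a_k, b_k) of natural numbers, the number of minimal factorizations F ∈ 𝔐_n with T_j(F) = a_j and M_j(F) = b_j for all 1 ≤ j ≤ k equals the number of minimal factorizations F ∈ 𝔐_n with T_j(F) = b_{k+1-j} and M_j(F) = a_{k+1-j} for all 1 ≤ j ≤ k. -/

import Mathlib

/-- `F` is a minimal factorization of size `n`, i.e. a factorization of the cycle
`(1,2,…,n)` (represented as `finRotate n` on `Fin n`, where the element `i ∈ {1,…,n}`
corresponds to the index `i-1 : Fin n`) into `n-1` transpositions: each `F k` is a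
transposition and the left-to-right product `τ₁ τ₂ ⋯ τ_{n-1}` (apply `τ₁` first)
equals the cycle. -/
def IsMinFact (n : ℕ) (F : Fin (n - 1) → Equiv.Perm (Fin n)) : Prop :=
  (∀ k, (F k).IsSwap) ∧ (List.ofFn F).reverse.prod = finRotate n

/-- `T(F, x)`: the number of transpositions in `F` moving the element represented by `x`. -/
def Tcount {n : ℕ} (F : Fin (n - 1) → Equiv.Perm (Fin n)) (x : Fin n) : ℕ :=
  (Finset.univ.filter fun k : Fin (n - 1) => F k x ≠ x).card

/-- `M(F, x)`: the number of indices `1 ≤ k ≤ n-1` with `τ₁⋯τ_{k-1}(x) ≠ τ₁⋯τ_k(x)`,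
i.e. the number of transpositions affecting the trajectory of `x` (left-to-right
partial products, so `τ₁⋯τ_k` is the product of the first `k` entries, applied
`τ₁` first). -/
def Mcount {n : ℕ} (F : Fin (n - 1) → Equiv.Perm (Fin n)) (x : Fin n) : ℕ :=
  (Finset.univ.filter fun k : Fin (n - 1) =>
    ((List.ofFn F).take k.val).reverse.prod x ≠
      ((List.ofFn F).take (k.val + 1)).reverse.prod x).card

/-! ### Auxiliary machinery: the conjugation-by-prefix involution -/

/-- Prefix product `Q_m = τ_m ∘ ⋯ ∘ τ_1` (apply `τ_1` first). -/
def ppre {n : ℕ} (F : Fin (n - 1) → Equiv.Perm (Fin n)) (m : ℕ) : Equiv.Perm (Fin n) :=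
  ((List.ofFn F).take m).reverse.prod

/-- The involution on minimal factorizations: conjugate `τ_{j+1}` by `Q_j * g`. -/
def psiMap {n : ℕ} (g : Equiv.Perm (Fin n)) (F : Fin (n - 1) → Equiv.Perm (Fin n)) :
    Fin (n - 1) → Equiv.Perm (Fin n) :=
  fun j => (ppre F j.val * g)⁻¹ * F j * (ppre F j.val * g)

lemma ppre_zero {n : ℕ} (F : Fin (n - 1) → Equiv.Perm (Fin n)) : ppre F 0 = 1 := rfl

lemma ppre_succ {n : ℕ} (F : Fin (n - 1) → Equiv.Perm (Fin n)) {m : ℕ} (h : m < n - 1) :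
    ppre F (m + 1) = F ⟨m, h⟩ * ppre F m := by
  unfold ppre
  have hlen : m < (List.ofFn F).length := by simpa using h
  rw [List.take_succ, List.getElem?_eq_getElem hlen, List.getElem_ofFn]
  simp

lemma inv_eq_self_of_isSwap {n : ℕ} {σ : Equiv.Perm (Fin n)} (h : σ.IsSwap) : σ⁻¹ = σ := by
  obtain ⟨a, b, -, rfl⟩ := h
  exact Equiv.swap_inv a b

lemma isSwap_conj {n : ℕ} {σ : Equiv.Perm (Fin n)} (h : σ.IsSwap) (u : Equiv.Perm (Fin n)) :
    (u⁻¹ * σ * u).IsSwap := by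
  obtain ⟨a, b, hab, rfl⟩ := h
  refine ⟨u⁻¹ a, u⁻¹ b, fun hc => hab (u⁻¹.injective hc), ?_⟩
  rw [Equiv.swap_apply_apply u⁻¹ a b, inv_inv]

lemma ppre_psiMap {n : ℕ} (g : Equiv.Perm (Fin n)) (F : Fin (n - 1) → Equiv.Perm (Fin n))
    (hF : ∀ k, (F k).IsSwap) :
    ∀ m, m ≤ n - 1 → ppre (psiMap g F) m = g⁻¹ * (ppre F m)⁻¹ * g := by
  intro m hm
  induction m with
  | zero => simp [ppre_zero]
  | succ m ih =>
    have hm' : m < n - 1 := hm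
    rw [ppre_succ _ hm', ppre_succ _ hm', ih (le_of_lt hm')]
    have hFinv : (F ⟨m, hm'⟩)⁻¹ = F ⟨m, hm'⟩ := inv_eq_self_of_isSwap (hF ⟨m, hm'⟩)
    show (ppre F m * g)⁻¹ * F ⟨m, hm'⟩ * (ppre F m * g) * (g⁻¹ * (ppre F m)⁻¹ * g) = _
    rw [mul_inv_rev (F ⟨m, hm'⟩) (ppre F m), hFinv]
    group

lemma isMinFact_psiMap {n : ℕ} (g : Equiv.Perm (Fin n)) (F : Fin (n - 1) → Equiv.Perm (Fin n))
    (hF : IsMinFact n F) (hg2 : g * g = 1)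
    (hgc : g * finRotate n * g = (finRotate n)⁻¹) :
    IsMinFact n (psiMap g F) := by
  have hginv : g⁻¹ = g := inv_eq_of_mul_eq_one_right hg2
  constructor
  · intro j
    exact isSwap_conj (hF.1 j) _
  · have htake : ∀ (G : Fin (n - 1) → Equiv.Perm (Fin n)),
        (List.ofFn G).reverse.prod = ppre G (n - 1) := by
      intro G
      unfold ppre
      rw [List.take_of_length_le (by simp)]
    rw [htake, ppre_psiMap g F hF.1 (n - 1) le_rfl, ← htake, hF.2, hginv, ← hgc]
    have h4 : g * (g * finRotate n * g) * g = (g * g) * finRotate n * (g * g) := by group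
    rw [h4, hg2, one_mul, mul_one]

lemma Tcount_psiMap {n : ℕ} (g : Equiv.Perm (Fin n)) (F : Fin (n - 1) → Equiv.Perm (Fin n))
    (x : Fin n) : Tcount (psiMap g F) x = Mcount F (g x) := by
  unfold Tcount Mcount
  congr 1
  apply Finset.filter_congr
  intro j _
  show (psiMap g F j x ≠ x) ↔ (ppre F j.val (g x) ≠ ppre F (j.val + 1) (g x))
  rw [ppre_succ F j.isLt]
  have hj : (⟨j.val, j.isLt⟩ : Fin (n - 1)) = j := rfl
  rw [hj]
  simp only [psiMap, mul_inv_rev, Equiv.Perm.mul_apply, ne_eq]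
  rw [Equiv.Perm.inv_eq_iff_eq, Equiv.Perm.inv_eq_iff_eq]
  exact not_congr eq_comm

lemma Mcount_psiMap {n : ℕ} (g : Equiv.Perm (Fin n)) (F : Fin (n - 1) → Equiv.Perm (Fin n))
    (hF : ∀ k, (F k).IsSwap) (x : Fin n) : Mcount (psiMap g F) x = Tcount F (g x) := by
  unfold Tcount Mcount
  congr 1
  apply Finset.filter_congr
  intro j _
  show (ppre (psiMap g F) j.val x ≠ ppre (psiMap g F) (j.val + 1) x) ↔ (F j (g x) ≠ g x)
  rw [ppre_psiMap g F hF j.val (le_of_lt j.isLt), ppre_psiMap g F hF (j.val + 1) j.isLt,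
    ppre_succ F j.isLt]
  have hj : (⟨j.val, j.isLt⟩ : Fin (n - 1)) = j := rfl
  have hFinv : (F j)⁻¹ = F j := inv_eq_self_of_isSwap (hF j)
  rw [hj, mul_inv_rev, hFinv]
  simp only [Equiv.Perm.mul_apply, ne_eq, EmbeddingLike.apply_eq_iff_eq]
  exact not_congr eq_comm

lemma psiMap_psiMap {n : ℕ} (g : Equiv.Perm (Fin n)) (F : Fin (n - 1) → Equiv.Perm (Fin n))
    (hF : ∀ k, (F k).IsSwap) (hg2 : g * g = 1) : psiMap g (psiMap g F) = F := by
  funext j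
  have h1 : ppre (psiMap g F) j.val = g⁻¹ * (ppre F j.val)⁻¹ * g :=
    ppre_psiMap g F hF j.val (le_of_lt j.isLt)
  show (ppre (psiMap g F) j.val * g)⁻¹ * psiMap g F j * (ppre (psiMap g F) j.val * g) = F j
  rw [h1]
  have h2 : g⁻¹ * (ppre F j.val)⁻¹ * g * g = (ppre F j.val * g)⁻¹ * g * g := by
    rw [mul_inv_rev]
  rw [h2]
  have h3 : (ppre F j.val * g)⁻¹ * g * g = (ppre F j.val * g)⁻¹ := by
    rw [mul_assoc, hg2, mul_one]
  rw [h3]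
  show ((ppre F j.val * g)⁻¹)⁻¹ * ((ppre F j.val * g)⁻¹ * F j * (ppre F j.val * g)) *
      (ppre F j.val * g)⁻¹ = F j
  group

/-- for `1 ≤ k ≤ n` and prescribed values `a j, b j`, the number of
minimal factorizations `F` with `T_j(F) = a j` and `M_j(F) = b j` for all `1 ≤ j ≤ k`
equals the number of those with `T_j(F) = b (k+1-j)` and `M_j(F) = a (k+1-j)` for
all `1 ≤ j ≤ k` (element `i` of `{1,…,n}` is the index `i-1 : Fin n`). -/
theorem symmetry_TM_reversal (n k : ℕ) (hn : 2 ≤ n) (hk1 : 1 ≤ k) (hk2 : k ≤ n)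
    (a b : ℕ → ℕ) :
    Nat.card {F : Fin (n - 1) → Equiv.Perm (Fin n) //
      IsMinFact n F ∧ ∀ j (h1 : 1 ≤ j) (h2 : j ≤ k),
        Tcount F ⟨j - 1, by omega⟩ = a j ∧ Mcount F ⟨j - 1, by omega⟩ = b j} =
    Nat.card {F : Fin (n - 1) → Equiv.Perm (Fin n) //
      IsMinFact n F ∧ ∀ j (h1 : 1 ≤ j) (h2 : j ≤ k),
        Tcount F ⟨j - 1, by omega⟩ = b (k + 1 - j) ∧
        Mcount F ⟨j - 1, by omega⟩ = a (k + 1 - j)} := by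
  obtain ⟨m, rfl⟩ : ∃ m, n = m + 2 := ⟨n - 2, by omega⟩
  -- the reflection g : x ↦ (k-1) - x  on Fin (m+2)
  set d : Fin (m + 2) := ⟨k - 1, by omega⟩ with hd
  set g : Equiv.Perm (Fin (m + 2)) := Equiv.subLeft d with hgdef
  have hg2 : g * g = 1 := by
    ext x
    simp [hgdef, Equiv.subLeft_apply, sub_sub_cancel]
  have hgc : g * finRotate (m + 2) * g = (finRotate (m + 2))⁻¹ := by
    have h1 : finRotate (m + 2) * (g * finRotate (m + 2) * g) = 1 := by
      ext x
      simp only [Equiv.Perm.mul_apply, Equiv.Perm.one_apply, hgdef, Equiv.subLeft_apply,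
        finRotate_succ_apply]
      exact congrArg Fin.val (by abel)
    exact eq_inv_of_mul_eq_one_right h1
  -- action of g on the window indices
  have hgidx : ∀ j (hj1 : 1 ≤ j) (hj2 : j ≤ k),
      g ⟨j - 1, by omega⟩ = (⟨(k + 1 - j) - 1, by omega⟩ : Fin (m + 2)) := by
    intro j h1 h2
    apply Fin.ext
    simp only [hgdef, Equiv.subLeft_apply]
    rw [Fin.sub_def]
    show ((m + 2) - ↑(⟨j - 1, by omega⟩ : Fin (m + 2)) + ↑d) % (m + 2) = (k + 1 - j) - 1
    have hdv : (d : ℕ) = k - 1 := rfl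
    have hjv : ((⟨j - 1, by omega⟩ : Fin (m + 2)) : ℕ) = j - 1 := rfl
    rw [hdv, hjv]
    have h3 : (m + 2) - (j - 1) + (k - 1) = (m + 2) + (k - j) := by omega
    rw [h3, Nat.add_mod_left, Nat.mod_eq_of_lt (by omega)]
    omega
  -- main transfer statement
  have main : ∀ (P Q : ℕ → ℕ) (F : Fin (m + 2 - 1) → Equiv.Perm (Fin (m + 2))),
      IsMinFact (m + 2) F →
      (∀ j (h1 : 1 ≤ j) (h2 : j ≤ k),
        Tcount F ⟨j - 1, by omega⟩ = P j ∧ Mcount F ⟨j - 1, by omega⟩ = Q j) →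
      IsMinFact (m + 2) (psiMap g F) ∧ ∀ j (h1 : 1 ≤ j) (h2 : j ≤ k),
        Tcount (psiMap g F) ⟨j - 1, by omega⟩ = Q (k + 1 - j) ∧
        Mcount (psiMap g F) ⟨j - 1, by omega⟩ = P (k + 1 - j) := by
    intro P Q F hF h
    refine ⟨isMinFact_psiMap g F hF hg2 hgc, fun j h1 h2 => ?_⟩
    have h1' : 1 ≤ k + 1 - j := by omega
    have h2' : k + 1 - j ≤ k := by omega
    have := h (k + 1 - j) h1' h2'
    constructor
    · rw [Tcount_psiMap, hgidx j h1 h2]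
      exact this.2
    · rw [Mcount_psiMap g F hF.1, hgidx j h1 h2]
      exact this.1
  apply Nat.card_congr
  refine
    { toFun := fun F => ⟨psiMap g F.1, (main a b F.1 F.2.1 F.2.2).1,
        (main a b F.1 F.2.1 F.2.2).2⟩
      invFun := fun F => ⟨psiMap g F.1, (main (fun j => b (k + 1 - j))
        (fun j => a (k + 1 - j)) F.1 F.2.1 F.2.2).1, ?_⟩
      left_inv := fun F => Subtype.ext (psiMap_psiMap g F.1 F.2.1.1 hg2)
      right_inv := fun F => Subtype.ext (psiMap_psiMap g F.1 F.2.1.1 hg2) }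
  intro j h1 h2
  have := (main (fun j => b (k + 1 - j)) (fun j => a (k + 1 - j)) F.1 F.2.1 F.2.2).2 j h1 h2
  have hj : k + 1 - (k + 1 - j) = j := by omega
  rw [hj] at this
  exact this
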